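/- Let γ ∈ (0, π/2), v² = 2cos²γ/(1+cos²γ), and a, b, c as in the spiral solution. Then the string configuration Y(τ,σ) = (a(vτ+σ) + b(vτ−σ), c cos(vτ−σ), c sin(vτ−σ)) satisfies |Ẏ|² = sin²γ, |Y'|² = cos²γ, and (Ẏ·Y') = 0 everywhere. -/

import Mathlib

open scoped RealInnerProductSpace

noncomputable def pt {n : ℕ} (Y : ℝ × ℝ → EuclideanSpace ℝ (Fin n)) (p : ℝ × ℝ) :
    EuclideanSpace ℝ (Fin n) := deriv (fun t => Y (t, p.2)) p.1

noncomputable def ps {n : ℕ} (Y : ℝ × ℝ → EuclideanSpace ℝ (Fin n)) (p : ℝ × ℝ) :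
    EuclideanSpace ℝ (Fin n) := deriv (fun s => Y (p.1, s)) p.2

lemma hasDerivAt_e3 {f g h : ℝ → ℝ} {f' g' h' : ℝ} {x : ℝ}
    (hf : HasDerivAt f f' x) (hg : HasDerivAt g g' x) (hh : HasDerivAt h h' x) :
    HasDerivAt (fun t => (WithLp.equiv 2 (Fin 3 → ℝ)).symm ![f t, g t, h t])
      ((WithLp.equiv 2 (Fin 3 → ℝ)).symm ![f', g', h']) x := by
  have hpi : HasDerivAt (fun t => ![f t, g t, h t] : ℝ → (Fin 3 → ℝ)) ![f', g', h'] x := by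
    apply hasDerivAt_pi.2
    intro i
    fin_cases i <;> simpa
  let e : (Fin 3 → ℝ) ≃L[ℝ] EuclideanSpace ℝ (Fin 3) :=
    (PiLp.continuousLinearEquiv 2 ℝ (fun _ : Fin 3 => ℝ)).symm
  have hL : HasFDerivAt (⇑e) (e : (Fin 3 → ℝ) →L[ℝ] EuclideanSpace ℝ (Fin 3)) (![f x, g x, h x]) :=
    e.toContinuousLinearMap.hasFDerivAt
  have := hL.comp_hasDerivAt x hpi
  exact this

lemma inner_e3 (u w : Fin 3 → ℝ) :
    ⟪(WithLp.equiv 2 (Fin 3 → ℝ)).symm u, (WithLp.equiv 2 (Fin 3 → ℝ)).symm w⟫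
      = u 0 * w 0 + u 1 * w 1 + u 2 * w 2 := by
  simp [PiLp.inner_apply, Fin.sum_univ_three, mul_comm]

theorem stmt8 (γ v a b c : ℝ)
    (hγ : γ ∈ Set.Ioo 0 (Real.pi / 2))
    (hv : v ^ 2 = 2 * Real.cos γ ^ 2 / (1 + Real.cos γ ^ 2))
    (ha : a = Real.sqrt (Real.sin γ ^ 2 + v ^ 2 * Real.cos γ ^ 2) / (2 * v))
    (hb : b = (Real.sin γ ^ 2 - v ^ 2 * Real.cos γ ^ 2) /
      (2 * v * Real.sqrt (Real.sin γ ^ 2 + v ^ 2 * Real.cos γ ^ 2)))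
    (hc : c = Real.sin γ * Real.cos γ /
      Real.sqrt (Real.sin γ ^ 2 + v ^ 2 * Real.cos γ ^ 2))
    (Y : ℝ × ℝ → EuclideanSpace ℝ (Fin 3))
    (hY : Y = fun p => (WithLp.equiv 2 (Fin 3 → ℝ)).symm
      ![a * (v * p.1 + p.2) + b * (v * p.1 - p.2),
        c * Real.cos (v * p.1 - p.2), c * Real.sin (v * p.1 - p.2)]) :
    ∀ p : ℝ × ℝ,
      ‖pt Y p‖ ^ 2 = Real.sin γ ^ 2 ∧
      ‖ps Y p‖ ^ 2 = Real.cos γ ^ 2 ∧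
      ⟪pt Y p, ps Y p⟫ = 0 := by
  obtain ⟨hγ0, hγ1⟩ := hγ
  have hs : 0 < Real.sin γ := Real.sin_pos_of_pos_of_lt_pi hγ0 (by linarith [Real.pi_pos])
  have hk : 0 < Real.cos γ := Real.cos_pos_of_mem_Ioo ⟨by linarith [Real.pi_pos], hγ1⟩
  set s := Real.sin γ with hs_def
  set k := Real.cos γ with hk_def
  have hk1 : (0:ℝ) < 1 + k ^ 2 := by positivity
  have hv2 : 0 < v ^ 2 := by rw [hv]; positivity
  have hv0 : v ≠ 0 := by intro h; rw [h] at hv2; simp at hv2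
  have hA : 0 < s ^ 2 + v ^ 2 * k ^ 2 := by positivity
  set A := s ^ 2 + v ^ 2 * k ^ 2 with hA_def
  have hR : 0 < Real.sqrt A := Real.sqrt_pos.2 hA
  have key : Real.sqrt A * Real.sqrt A = A := Real.mul_self_sqrt hA.le
  have key2 : Real.sqrt A ^ 2 = A := Real.sq_sqrt hA.le
  -- key algebraic identities
  have hab : v * (a + b) = s ^ 2 / Real.sqrt A := by
    rw [ha, hb]; field_simp
    linear_combination key2 + hA_def
  have hamb : a - b = v * k ^ 2 / Real.sqrt A := by
    rw [ha, hb]; field_simp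
    linear_combination key2 + hA_def
  have hc2 : c ^ 2 = s ^ 2 * k ^ 2 / A := by
    rw [hc, div_pow, Real.sq_sqrt hA.le]; ring_nf
  have G1 : (v * (a + b)) ^ 2 + c ^ 2 * v ^ 2 = s ^ 2 := by
    rw [hab, hc2, div_pow, Real.sq_sqrt hA.le]
    field_simp
    linear_combination s ^ 2 * hA_def
  have G2 : (a - b) ^ 2 + c ^ 2 = k ^ 2 := by
    rw [hamb, hc2, div_pow, Real.sq_sqrt hA.le]
    field_simp
    linear_combination k ^ 2 * hA_def
  have G3 : (a + b) * (a - b) = c ^ 2 := by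
    have hv' : v * ((a + b) * (a - b)) = v * c ^ 2 := by
      rw [show v * ((a + b) * (a - b)) = (v * (a + b)) * (a - b) by ring, hab, hamb, hc2]
      field_simp
      linear_combination -key2
    exact mul_left_cancel₀ hv0 hv'
  intro p
  obtain ⟨τ, σ⟩ := p
  have h2 : HasDerivAt (fun t : ℝ => v * t - σ) v τ := by
    simpa using ((hasDerivAt_id τ).const_mul v).sub_const σ
  have h1 : HasDerivAt (fun t : ℝ => v * t + σ) v τ := by
    simpa using ((hasDerivAt_id τ).const_mul v).add_const σ
  have hpt : pt Y (τ, σ) = (WithLp.equiv 2 (Fin 3 → ℝ)).symm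
      ![a * v + b * v, c * (-Real.sin (v * τ - σ) * v), c * (Real.cos (v * τ - σ) * v)] := by
    have hd : HasDerivAt (fun t => (WithLp.equiv 2 (Fin 3 → ℝ)).symm
        ![a * (v * t + σ) + b * (v * t - σ),
          c * Real.cos (v * t - σ), c * Real.sin (v * t - σ)])
        ((WithLp.equiv 2 (Fin 3 → ℝ)).symm
          ![a * v + b * v, c * (-Real.sin (v * τ - σ) * v), c * (Real.cos (v * τ - σ) * v)]) τ :=
      hasDerivAt_e3
        (by simpa [mul_comm, Pi.add_def] using (h1.const_mul a).add (h2.const_mul b))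
        ((h2.cos).const_mul c) ((h2.sin).const_mul c)
    simp only [pt, hY]
    exact hd.deriv
  have h1' : HasDerivAt (fun x : ℝ => v * τ + x) 1 σ := by
    simpa using (hasDerivAt_id σ).const_add (v * τ)
  have h2' : HasDerivAt (fun x : ℝ => v * τ - x) (-1) σ := by
    simpa using (hasDerivAt_id σ).const_sub (v * τ)
  have hps : ps Y (τ, σ) = (WithLp.equiv 2 (Fin 3 → ℝ)).symm
      ![a - b, c * (-Real.sin (v * τ - σ) * (-1)), c * (Real.cos (v * τ - σ) * (-1))] := by
    have hd : HasDerivAt (fun x => (WithLp.equiv 2 (Fin 3 → ℝ)).symm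
        ![a * (v * τ + x) + b * (v * τ - x),
          c * Real.cos (v * τ - x), c * Real.sin (v * τ - x)])
        ((WithLp.equiv 2 (Fin 3 → ℝ)).symm
          ![a - b, c * (-Real.sin (v * τ - σ) * (-1)), c * (Real.cos (v * τ - σ) * (-1))]) σ :=
      hasDerivAt_e3
        (by have := (h1'.const_mul a).add (h2'.const_mul b); simp only [mul_one, mul_neg, ← sub_eq_add_neg] at this; exact this)
        ((h2'.cos).const_mul c) ((h2'.sin).const_mul c)
    simp only [ps, hY]
    exact hd.deriv
  have pyth := Real.sin_sq_add_cos_sq (v * τ - σ)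
  refine ⟨?_, ?_, ?_⟩
  · rw [← real_inner_self_eq_norm_sq, hpt, inner_e3]
    simp only [Matrix.cons_val_zero, Matrix.cons_val_one, Matrix.head_cons,
      Matrix.cons_val_two, Matrix.tail_cons]
    linear_combination G1 + c ^ 2 * v ^ 2 * pyth
  · rw [← real_inner_self_eq_norm_sq, hps, inner_e3]
    simp only [Matrix.cons_val_zero, Matrix.cons_val_one, Matrix.head_cons,
      Matrix.cons_val_two, Matrix.tail_cons]
    linear_combination G2 + c ^ 2 * pyth
  · rw [hpt, hps, inner_e3]
    simp only [Matrix.cons_val_zero, Matrix.cons_val_one, Matrix.head_cons,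
      Matrix.cons_val_two, Matrix.tail_cons]
    linear_combination v * G3 - v * c ^ 2 * pyth
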